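/- Let Q be a quiver with vertex set I, S = kI, and let k\bar{Q} be the path algebra of the doubled quiver with the double Poisson bracket determined by {{x, x*}} = e_{s(x)} ⊗ e_{t(x)}, {{x*, x}} = -e_{t(x)} ⊗ e_{s(x)} for each arrow x of Q, all other brackets of generators zero. Then this is a double Poisson bracket (vanishing triple bracket), and the elements δ_i := e_i (Σ_{x ∈ Q_1} [x, x*]) e_i satisfy {{δ_i, a}} = a e_i ⊗ e_i - e_i ⊗ e_i a for every a ∈ k\bar{Q}, i.e. they define a noncommutative Hamiltonian action (noncommutative moment map). -/

import Mathlib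

/-!
STATEMENT 8: For a quiver Q with vertex set I and S = kI, the path algebra of the
doubled quiver with the double bracket determined by {{x,x*}} = e_{s(x)} ⊗ e_{t(x)},
{{x*,x}} = -e_{t(x)} ⊗ e_{s(x)} (all other brackets of generators zero) is a double
Poisson algebra, and δ_i = e_i (Σ_x [x,x*]) e_i satisfies
{{δ_i, a}} = a e_i ⊗ e_i - e_i ⊗ e_i a for all a (noncommutative Hamiltonian action).
The path algebra is encoded as any k-algebra A carrying orthogonal idempotents
(e_i), arrows X and reversed arrows Xs that generate it, with a double bracket
having the indicated values on generators.
-/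

namespace Stmt8

open TensorProduct

variable {R A : Type*} [CommRing R] [Ring A] [Algebra R A]

/-- The cyclic permutation τ_(123) on A⊗A⊗A : x⊗y⊗z ↦ z⊗x⊗y. -/
noncomputable def cyc3 (R A : Type*) [CommRing R] [Ring A] [Algebra R A] :
    (A ⊗[R] A) ⊗[R] A →ₗ[R] (A ⊗[R] A) ⊗[R] A :=
  ((TensorProduct.assoc R A A A).symm.toLinearMap).comp
    (TensorProduct.comm R (A ⊗[R] A) A).toLinearMap

/-- The triple bracket associated to a binary operation `D`:
{{a,b,c}} = {{a,{{b,c}}}}_L + τ_(123){{b,{{c,a}}}}_L + τ_(132){{c,{{a,b}}}}_L,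
where {{a,u⊗v}}_L = {{a,u}}⊗v. -/
noncomputable def tripleBr (D : A →ₗ[R] A →ₗ[R] A ⊗[R] A) (a b c : A) :
    (A ⊗[R] A) ⊗[R] A :=
  LinearMap.rTensor A (D a) (D b c)
    + cyc3 R A (LinearMap.rTensor A (D b) (D c a))
    + cyc3 R A (cyc3 R A (LinearMap.rTensor A (D c) (D a b)))

/-- The single bracket {a,b} = m({{a,b}}) associated to `D`. -/
noncomputable def sb (D : A →ₗ[R] A →ₗ[R] A ⊗[R] A) (a b : A) : A :=
  LinearMap.mul' R A (D a b)

lemma cyc3_tmul (x y z : A) : cyc3 R A ((x ⊗ₜ[R] y) ⊗ₜ[R] z) = (z ⊗ₜ[R] x) ⊗ₜ[R] y := rfl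

lemma cyc3_eq (x : (A ⊗[R] A) ⊗[R] A) :
    cyc3 R A x = (Algebra.TensorProduct.assoc R R R A A A).symm
      ((Algebra.TensorProduct.comm R (A ⊗[R] A) A) x) := rfl

lemma cyc3_mul (x y : (A ⊗[R] A) ⊗[R] A) : cyc3 R A (x * y) = cyc3 R A x * cyc3 R A y := by
  simp [cyc3_eq, map_mul]

lemma cyc3_cyc3_cyc3 (z : (A ⊗[R] A) ⊗[R] A) :
    cyc3 R A (cyc3 R A (cyc3 R A z)) = z := by
  induction z using TensorProduct.induction_on with
  | zero => simp
  | add x y hx hy => simp [map_add, hx, hy]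
  | tmul x c =>
    induction x using TensorProduct.induction_on with
    | zero => simp
    | add x y hx hy => simp only [add_tmul, map_add, hx, hy]
    | tmul a b => simp [cyc3_tmul]

section Dlem

variable {k Av : Type*} [CommRing k] [Ring Av] [Algebra k Av]

noncomputable def lmul2 (w : Av ⊗[k] Av) : Av →ₗ[k] Av ⊗[k] Av :=
  (LinearMap.mulLeft k w).comp (Algebra.TensorProduct.includeRight : Av →ₐ[k] Av ⊗[k] Av).toLinearMap

noncomputable def rmul2 (w : Av ⊗[k] Av) : Av →ₗ[k] Av ⊗[k] Av :=
  (LinearMap.mulRight k w).comp (Algebra.TensorProduct.includeLeft : Av →ₐ[k] Av ⊗[k] Av).toLinearMap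

@[simp] lemma lmul2_apply (w : Av ⊗[k] Av) (u : Av) : lmul2 w u = w * ((1:Av) ⊗ₜ[k] u) := rfl
@[simp] lemma rmul2_apply (w : Av ⊗[k] Av) (u : Av) : rmul2 w u = (u ⊗ₜ[k] (1:Av)) * w := rfl

lemma lmul2_add (w w' : Av ⊗[k] Av) : lmul2 (w + w') = lmul2 w + lmul2 w' := by
  ext u; simp [add_mul]

lemma rmul2_add (w w' : Av ⊗[k] Av) : rmul2 (w + w') = rmul2 w + rmul2 w' := by
  ext u; simp [mul_add]

lemma lmul2_zero : lmul2 (0 : Av ⊗[k] Av) = 0 := by ext u; simp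
lemma rmul2_zero : rmul2 (0 : Av ⊗[k] Av) = 0 := by ext u; simp

variable (D : Av →ₗ[k] Av →ₗ[k] Av ⊗[k] Av)
variable (hder : ∀ a b c : Av, D a (b * c) = D a b * (1 ⊗ₜ[k] c) + (b ⊗ₜ[k] 1) * D a c)
variable (hanti : ∀ a b : Av, D a b = - (TensorProduct.comm k Av Av) (D b a))

include hder in
lemma D_one (a : Av) : D a 1 = 0 := by
  have h := hder a 1 1
  rw [one_mul, ← Algebra.TensorProduct.one_def, mul_one, one_mul] at h
  have h2 : D a 1 + D a 1 = D a 1 + 0 := by rw [add_zero]; exact h.symm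
  exact (add_left_cancel h2)

include hder hanti in
lemma D_first (a b c : Av) :
    D (b * c) a = D b a * (c ⊗ₜ[k] (1:Av)) + ((1:Av) ⊗ₜ[k] b) * D c a := by
  have hm : ∀ x y : Av ⊗[k] Av, (TensorProduct.comm k Av Av) (x * y)
      = (TensorProduct.comm k Av Av) x * (TensorProduct.comm k Av Av) y :=
    fun x y => map_mul (Algebra.TensorProduct.comm k Av Av) x y
  rw [hanti (b*c) a, hder a b c, map_add, hm, hm, TensorProduct.comm_tmul,
    TensorProduct.comm_tmul, hanti b a, hanti c a]
  simp only [neg_add, neg_mul, mul_neg]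

-- S1
include hder in
lemma S1 (a c' : Av) (Y : Av ⊗[k] Av) :
    LinearMap.rTensor Av (D a) (Y * ((1:Av) ⊗ₜ[k] c'))
      = LinearMap.rTensor Av (D a) Y * (((1:Av) ⊗ₜ[k] (1:Av)) ⊗ₜ[k] c') := by
  induction Y using TensorProduct.induction_on with
  | zero => simp
  | add x y hx hy => simp [add_mul, map_add, hx, hy]
  | tmul u v => simp [Algebra.TensorProduct.tmul_mul_tmul, ← Algebra.TensorProduct.one_def]

include hder in
lemma S2 (a c : Av) (Y : Av ⊗[k] Av) :
    LinearMap.rTensor Av (D a) ((c ⊗ₜ[k] (1:Av)) * Y)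
      = LinearMap.rTensor Av (lmul2 (D a c)) Y
        + ((c ⊗ₜ[k] (1:Av)) ⊗ₜ[k] (1:Av)) * LinearMap.rTensor Av (D a) Y := by
  induction Y using TensorProduct.induction_on with
  | zero => simp
  | add x y hx hy => simp only [mul_add, map_add, hx, hy]; abel
  | tmul u v =>
    simp [Algebra.TensorProduct.tmul_mul_tmul, hder a c u, add_tmul]

include hder in
lemma S3 (b c' : Av) (Y : Av ⊗[k] Av) :
    LinearMap.rTensor Av (D b) (Y * (c' ⊗ₜ[k] (1:Av)))
      = LinearMap.rTensor Av (D b) Y * (((1:Av) ⊗ₜ[k] c') ⊗ₜ[k] (1:Av))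
        + LinearMap.rTensor Av (rmul2 (D b c')) Y := by
  induction Y using TensorProduct.induction_on with
  | zero => simp
  | add x y hx hy => simp only [add_mul, map_add, hx, hy]; abel
  | tmul u v =>
    simp [Algebra.TensorProduct.tmul_mul_tmul, hder b u c', add_tmul]

lemma S4 (b c : Av) (Y : Av ⊗[k] Av) :
    LinearMap.rTensor Av (D b) (((1:Av) ⊗ₜ[k] c) * Y)
      = (((1:Av) ⊗ₜ[k] (1:Av)) ⊗ₜ[k] c) * LinearMap.rTensor Av (D b) Y := by
  induction Y using TensorProduct.induction_on with
  | zero => simp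
  | add x y hx hy => simp [mul_add, map_add, hx, hy]
  | tmul u v => simp [Algebra.TensorProduct.tmul_mul_tmul, ← Algebra.TensorProduct.one_def]

include hder hanti in
lemma S5 (a b c c' : Av) (Y : Av ⊗[k] Av) :
    LinearMap.rTensor Av (D (c * c')) Y
      = LinearMap.rTensor Av (D c) Y * ((c' ⊗ₜ[k] (1:Av)) ⊗ₜ[k] (1:Av))
        + (((1:Av) ⊗ₜ[k] c) ⊗ₜ[k] (1:Av)) * LinearMap.rTensor Av (D c') Y := by
  induction Y using TensorProduct.induction_on with
  | zero => simp
  | add x y hx hy => simp only [map_add, hx, hy, add_mul, mul_add]; abel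
  | tmul u v =>
    simp [Algebra.TensorProduct.tmul_mul_tmul, D_first D hder hanti u c c', add_tmul]

lemma cancel (P Q : Av ⊗[k] Av) :
    LinearMap.rTensor Av (lmul2 P) Q
      + cyc3 k Av (LinearMap.rTensor Av (rmul2 Q) (-(TensorProduct.comm k Av Av) P)) = 0 := by
  induction P using TensorProduct.induction_on with
  | zero => simp [lmul2_zero]
  | add P₁ P₂ h1 h2 =>
    rw [lmul2_add, LinearMap.rTensor_add, map_add, neg_add, map_add, map_add]
    rw [LinearMap.add_apply]
    have := h1; have := h2
    calc _ = (LinearMap.rTensor Av (lmul2 P₁) Q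
          + cyc3 k Av (LinearMap.rTensor Av (rmul2 Q) (-(TensorProduct.comm k Av Av) P₁)))
        + (LinearMap.rTensor Av (lmul2 P₂) Q
          + cyc3 k Av (LinearMap.rTensor Av (rmul2 Q) (-(TensorProduct.comm k Av Av) P₂))) := by abel
      _ = 0 := by rw [h1, h2, add_zero]
  | tmul p q =>
    induction Q using TensorProduct.induction_on with
    | zero => simp [rmul2_zero]
    | add Q₁ Q₂ h1 h2 =>
      rw [rmul2_add, LinearMap.rTensor_add, map_add, LinearMap.add_apply, map_add]
      calc _ = (LinearMap.rTensor Av (lmul2 (p ⊗ₜ[k] q)) Q₁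
            + cyc3 k Av (LinearMap.rTensor Av (rmul2 Q₁) (-(TensorProduct.comm k Av Av) (p ⊗ₜ[k] q))))
          + (LinearMap.rTensor Av (lmul2 (p ⊗ₜ[k] q)) Q₂
            + cyc3 k Av (LinearMap.rTensor Av (rmul2 Q₂) (-(TensorProduct.comm k Av Av) (p ⊗ₜ[k] q)))) := by abel
        _ = 0 := by rw [h1, h2, add_zero]
    | tmul u v =>
      simp [Algebra.TensorProduct.tmul_mul_tmul, TensorProduct.comm_tmul, neg_tmul, cyc3_tmul]

end Dlem
section Dlem2
variable {k Av : Type*} [CommRing k] [Ring Av] [Algebra k Av]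
variable (D : Av →ₗ[k] Av →ₗ[k] Av ⊗[k] Av)
variable (hder : ∀ a b c : Av, D a (b * c) = D a b * (1 ⊗ₜ[k] c) + (b ⊗ₜ[k] 1) * D a c)
variable (hanti : ∀ a b : Av, D a b = - (TensorProduct.comm k Av Av) (D b a))

include hder hanti in
lemma triple_der (a b c c' : Av) :
    tripleBr D a b (c * c')
      = tripleBr D a b c * (((1:Av) ⊗ₜ[k] (1:Av)) ⊗ₜ[k] c')
        + ((c ⊗ₜ[k] (1:Av)) ⊗ₜ[k] (1:Av)) * tripleBr D a b c' := by
  have e1 : LinearMap.rTensor Av (D a) (D b (c * c'))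
      = LinearMap.rTensor Av (D a) (D b c) * (((1:Av) ⊗ₜ[k] (1:Av)) ⊗ₜ[k] c')
        + (LinearMap.rTensor Av (lmul2 (D a c)) (D b c')
          + ((c ⊗ₜ[k] (1:Av)) ⊗ₜ[k] (1:Av)) * LinearMap.rTensor Av (D a) (D b c')) := by
    rw [hder b c c', map_add, S1 D hder a c' (D b c), S2 D hder a c (D b c')]
  have e2 : cyc3 k Av (LinearMap.rTensor Av (D b) (D (c * c') a))
      = cyc3 k Av (LinearMap.rTensor Av (D b) (D c a)) * (((1:Av) ⊗ₜ[k] (1:Av)) ⊗ₜ[k] c')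
        + cyc3 k Av (LinearMap.rTensor Av (rmul2 (D b c')) (D c a))
        + ((c ⊗ₜ[k] (1:Av)) ⊗ₜ[k] (1:Av)) * cyc3 k Av (LinearMap.rTensor Av (D b) (D c' a)) := by
    rw [D_first D hder hanti a c c', map_add, S3 D hder b c' (D c a),
      S4 D b c (D c' a), map_add, map_add, cyc3_mul, cyc3_mul, cyc3_tmul, cyc3_tmul]
  have e3 : cyc3 k Av (cyc3 k Av (LinearMap.rTensor Av (D (c * c')) (D a b)))
      = cyc3 k Av (cyc3 k Av (LinearMap.rTensor Av (D c) (D a b))) * (((1:Av) ⊗ₜ[k] (1:Av)) ⊗ₜ[k] c')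
        + ((c ⊗ₜ[k] (1:Av)) ⊗ₜ[k] (1:Av))
            * cyc3 k Av (cyc3 k Av (LinearMap.rTensor Av (D c') (D a b))) := by
    rw [S5 D hder hanti a b c c' (D a b), map_add, cyc3_mul, cyc3_mul, map_add,
      cyc3_mul, cyc3_mul, cyc3_tmul, cyc3_tmul, cyc3_tmul, cyc3_tmul]
  have hc : LinearMap.rTensor Av (lmul2 (D a c)) (D b c')
      + cyc3 k Av (LinearMap.rTensor Av (rmul2 (D b c')) (D c a)) = 0 := by
    rw [hanti c a]; exact cancel (D a c) (D b c')
  have hc' : LinearMap.rTensor Av (lmul2 (D a c)) (D b c')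
      = - cyc3 k Av (LinearMap.rTensor Av (rmul2 (D b c')) (D c a)) :=
    eq_neg_of_add_eq_zero_left hc
  unfold tripleBr
  rw [e1, e2, e3, hc']
  rw [add_mul, add_mul, mul_add, mul_add]
  abel

lemma triple_cyc (a b c : Av) : cyc3 k Av (tripleBr D a b c) = tripleBr D c a b := by
  unfold tripleBr
  rw [map_add, map_add, cyc3_cyc3_cyc3]
  abel

lemma triple_add3 (a b c c' : Av) :
    tripleBr D a b (c + c') = tripleBr D a b c + tripleBr D a b c' := by
  unfold tripleBr
  simp only [map_add, LinearMap.rTensor_add, LinearMap.add_apply]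
  abel

include hder hanti in
lemma triple_alg3 (a b : Av) (r : k) :
    tripleBr D a b (algebraMap k Av r) = 0 := by
  have hD1 : D (1:Av) = 0 := by
    ext x
    rw [hanti 1 x, D_one D hder x]
    simp
  have h1 : D b (algebraMap k Av r) = 0 := by
    rw [Algebra.algebraMap_eq_smul_one, map_smul, D_one D hder b, smul_zero]
  have h2 : D (algebraMap k Av r) = 0 := by
    rw [Algebra.algebraMap_eq_smul_one, map_smul, hD1, smul_zero]
  unfold tripleBr
  rw [h1, h2]
  simp
end Dlem2

theorem doubledQuiver_hamiltonian
    {k : Type*} [Field k] {Av : Type*} [Ring Av] [Algebra k Av]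
    {I : Type*} [Fintype I] [DecidableEq I]
    {Ar : Type*} [Fintype Ar] [DecidableEq Ar]
    (src tgt : Ar → I)
    -- the orthogonal idempotents e_i, summing to 1
    (E : I → Av) (hE : ∀ i j, E i * E j = if i = j then E i else 0)
    (hEsum : ∑ i, E i = 1)
    -- the arrows x and the reversed arrows x* of the doubled quiver
    (X Xs : Ar → Av)
    (hX : ∀ e, E (tgt e) * X e * E (src e) = X e)
    (hXs : ∀ e, E (src e) * Xs e * E (tgt e) = Xs e)
    -- they generate the path algebra
    (hgen : Algebra.adjoin k (Set.range X ∪ Set.range Xs ∪ Set.range E) = ⊤)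
    -- the double bracket
    (D : Av →ₗ[k] Av →ₗ[k] Av ⊗[k] Av)
    (hder : ∀ a b c : Av, D a (b * c) = D a b * (1 ⊗ₜ[k] c) + (b ⊗ₜ[k] 1) * D a c)
    (hanti : ∀ a b : Av, D a b = - (TensorProduct.comm k Av Av) (D b a))
    -- S-linearity
    (hlin : ∀ (a : Av) (i : I), D a (E i) = 0)
    -- values on generators: {{x, x*}} = e_{s(x)} ⊗ e_{t(x)}, etc.
    (hXXs : ∀ e f, D (X e) (Xs f)
        = if e = f then (E (src e)) ⊗ₜ[k] (E (tgt e)) else 0)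
    (hXsX : ∀ e f, D (Xs e) (X f)
        = if e = f then -((E (tgt e)) ⊗ₜ[k] (E (src e))) else 0)
    (hXX : ∀ e f, D (X e) (X f) = 0)
    (hXsXs : ∀ e f, D (Xs e) (Xs f) = 0) :
    -- this is a double Poisson bracket ...
    (∀ a b c : Av, tripleBr D a b c = 0) ∧
    -- ... and δ_i = e_i (Σ_x [x,x*]) e_i is a noncommutative moment map
    (∀ (i : I) (a : Av),
      D (E i * (∑ e, (X e * Xs e - Xs e * X e)) * E i) a
        = ((a * E i) ⊗ₜ[k] (E i)) - ((E i) ⊗ₜ[k] (E i * a))) := by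
  classical
  -- basic consequences
  have hDE2 : ∀ (a : Av) (i : I), D (E i) a = 0 := by
    intro a i
    rw [hanti (E i) a, hlin a i]
    simp
  have hmemG : ∀ a : Av,
      a ∈ Algebra.adjoin k (Set.range X ∪ Set.range Xs ∪ Set.range E) := by
    intro a; rw [hgen]; exact Algebra.mem_top
  -- multiplication facts
  have hXl : ∀ e, E (tgt e) * X e = X e := by
    intro e
    nth_rewrite 1 [← hX e]
    rw [← mul_assoc, ← mul_assoc, hE, if_pos rfl, hX]
  have hXr : ∀ e, X e * E (src e) = X e := by
    intro e
    nth_rewrite 1 [← hX e]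
    rw [mul_assoc, hE, if_pos rfl, hX]
  have hXsl : ∀ e, E (src e) * Xs e = Xs e := by
    intro e
    nth_rewrite 1 [← hXs e]
    rw [← mul_assoc, ← mul_assoc, hE, if_pos rfl, hXs]
  have hXsr : ∀ e, Xs e * E (tgt e) = Xs e := by
    intro e
    nth_rewrite 1 [← hXs e]
    rw [mul_assoc, hE, if_pos rfl, hXs]
  have hEX : ∀ e i, E i * X e = if i = tgt e then X e else 0 := by
    intro e i
    nth_rewrite 1 [← hXl e]
    rw [← mul_assoc, hE]
    split_ifs with h
    · rw [h, hXl]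
    · simp
  have hXE : ∀ e i, X e * E i = if src e = i then X e else 0 := by
    intro e i
    nth_rewrite 1 [← hXr e]
    rw [mul_assoc, hE]
    split_ifs with h
    · exact hXr e
    · simp
  have hEXs : ∀ e i, E i * Xs e = if i = src e then Xs e else 0 := by
    intro e i
    nth_rewrite 1 [← hXsl e]
    rw [← mul_assoc, hE]
    split_ifs with h
    · rw [h, hXsl]
    · simp
  have hXsE : ∀ e i, Xs e * E i = if tgt e = i then Xs e else 0 := by
    intro e i
    nth_rewrite 1 [← hXsr e]
    rw [mul_assoc, hE]
    split_ifs with h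
    · exact hXsr e
    · simp
  constructor
  · -- part 1: vanishing triple bracket
    -- key: double brackets of generators are killed by rTensor (D f)
    have key : ∀ g ∈ Set.range X ∪ Set.range Xs ∪ Set.range E,
        ∀ h ∈ Set.range X ∪ Set.range Xs ∪ Set.range E,
        ∀ f : Av, LinearMap.rTensor Av (D f) (D g h) = 0 := by
      rintro g ((⟨e, rfl⟩ | ⟨e, rfl⟩) | ⟨i, rfl⟩) h ((⟨e', rfl⟩ | ⟨e', rfl⟩) | ⟨j, rfl⟩) f
      · rw [hXX]; simp
      · rw [hXXs]; split_ifs <;> simp [hlin]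
      · rw [hlin]; simp
      · rw [hXsX]; split_ifs <;> simp [hlin]
      · rw [hXsXs]; simp
      · rw [hlin]; simp
      · rw [hDE2]; simp
      · rw [hDE2]; simp
      · rw [hDE2]; simp
    have base : ∀ g ∈ Set.range X ∪ Set.range Xs ∪ Set.range E,
        ∀ h ∈ Set.range X ∪ Set.range Xs ∪ Set.range E,
        ∀ c ∈ Set.range X ∪ Set.range Xs ∪ Set.range E,
        tripleBr D g h c = 0 := by
      intro g hg h hh c hc
      unfold tripleBr
      rw [key h hh c hc g, key c hc g hg h, key g hg h hh c]
      simp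
    have claimB : ∀ g ∈ Set.range X ∪ Set.range Xs ∪ Set.range E,
        ∀ h ∈ Set.range X ∪ Set.range Xs ∪ Set.range E,
        ∀ c : Av, tripleBr D g h c = 0 := by
      intro g hg h hh c
      refine Algebra.adjoin_induction (hx := hmemG c)
        (p := fun x _ => tripleBr D g h x = 0) ?_ ?_ ?_ ?_
      · intro x hx; exact base g hg h hh x hx
      · intro r; exact triple_alg3 D hder hanti g h r
      · intro x y _ _ hx hy
        rw [triple_add3, hx, hy, add_zero]
      · intro x y _ _ hx hy
        rw [triple_der D hder hanti, hx, hy, zero_mul, mul_zero, add_zero]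
    have claimC : ∀ g ∈ Set.range X ∪ Set.range Xs ∪ Set.range E,
        ∀ b c : Av, tripleBr D c g b = 0 := by
      intro g hg b
      refine Algebra.adjoin_induction (hx := hmemG b)
        (p := fun x _ => ∀ c : Av, tripleBr D c g x = 0) ?_ ?_ ?_ ?_
      · intro x hx c
        rw [← triple_cyc D g x c, claimB g hg x hx c, map_zero]
      · intro r c; exact triple_alg3 D hder hanti c g r
      · intro x y _ _ hx hy c
        rw [triple_add3, hx, hy, add_zero]
      · intro x y _ _ hx hy c
        rw [triple_der D hder hanti, hx, hy, zero_mul, mul_zero, add_zero]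
    have claimD : ∀ g ∈ Set.range X ∪ Set.range Xs ∪ Set.range E,
        ∀ b c : Av, tripleBr D g b c = 0 := by
      intro g hg b c
      have h2 : cyc3 k Av (cyc3 k Av (tripleBr D c g b)) = tripleBr D g b c := by
        rw [triple_cyc D c g b, triple_cyc D b c g]
      rw [← h2, claimC g hg b c]
      simp
    intro a b c
    have aux : ∀ z : Av, ∀ a b : Av, tripleBr D a b z = 0 := by
      intro z
      refine Algebra.adjoin_induction (hx := hmemG z)
        (p := fun x _ => ∀ a b : Av, tripleBr D a b x = 0) ?_ ?_ ?_ ?_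
      · intro x hx a b
        calc tripleBr D a b x
            = cyc3 k Av (cyc3 k Av (cyc3 k Av (tripleBr D a b x))) :=
              (cyc3_cyc3_cyc3 _).symm
          _ = cyc3 k Av (cyc3 k Av (tripleBr D x a b)) := by rw [triple_cyc D a b x]
          _ = 0 := by rw [claimD x hx a b]; simp
      · intro r a b; exact triple_alg3 D hder hanti a b r
      · intro x y _ _ hx hy a b
        rw [triple_add3, hx, hy, add_zero]
      · intro x y _ _ hx hy a b
        rw [triple_der D hder hanti, hx, hy, zero_mul, mul_zero, add_zero]
    exact aux c a b
  · -- part 2: moment map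
    intro i a
    set s : Av := ∑ e, (X e * Xs e - Xs e * X e) with hs
    have hDdelta : ∀ y : Av, D (E i * s * E i) y
        = ((1:Av) ⊗ₜ[k] E i) * (D s y) * (E i ⊗ₜ[k] (1:Av)) := by
      intro y
      rw [D_first D hder hanti y (E i * s) (E i),
        D_first D hder hanti y (E i) s, hDE2 y i]
      simp [add_mul]
    -- values of D s on generators
    have hDsX : ∀ f, D s (X f) = (X f) ⊗ₜ[k] (E (src f)) - (E (tgt f)) ⊗ₜ[k] (X f) := by
      intro f
      have hsum : D s = ∑ e, (D (X e * Xs e) - D (Xs e * X e)) := by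
        rw [hs, map_sum]
        exact Finset.sum_congr rfl fun e _ => map_sub D _ _
      rw [hsum, LinearMap.sum_apply]
      have : ∀ e, (D (X e * Xs e) - D (Xs e * X e)) (X f)
          = if e = f then ((X e) ⊗ₜ[k] (E (src e)) - (E (tgt e)) ⊗ₜ[k] (X e)) else 0 := by
        intro e
        rw [LinearMap.sub_apply, D_first D hder hanti (X f) (X e) (Xs e),
          D_first D hder hanti (X f) (Xs e) (X e), hXX, hXsX]
        split_ifs with h
        · subst h
          simp only [zero_mul, mul_zero, zero_add, add_zero, neg_mul, mul_neg,
            Algebra.TensorProduct.tmul_mul_tmul, one_mul, mul_one]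
          rw [hXr, hXl]
          abel
        · simp
      rw [Finset.sum_congr rfl fun e _ => this e, Finset.sum_ite_eq' Finset.univ f]
      simp
    have hDsXs : ∀ f, D s (Xs f) = (Xs f) ⊗ₜ[k] (E (tgt f)) - (E (src f)) ⊗ₜ[k] (Xs f) := by
      intro f
      have hsum : D s = ∑ e, (D (X e * Xs e) - D (Xs e * X e)) := by
        rw [hs, map_sum]
        exact Finset.sum_congr rfl fun e _ => map_sub D _ _
      rw [hsum, LinearMap.sum_apply]
      have : ∀ e, (D (X e * Xs e) - D (Xs e * X e)) (Xs f)
          = if e = f then ((Xs e) ⊗ₜ[k] (E (tgt e)) - (E (src e)) ⊗ₜ[k] (Xs e)) else 0 := by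
        intro e
        rw [LinearMap.sub_apply, D_first D hder hanti (Xs f) (X e) (Xs e),
          D_first D hder hanti (Xs f) (Xs e) (X e), hXsXs, hXXs]
        split_ifs with h
        · subst h
          simp only [zero_mul, mul_zero, zero_add, add_zero,
            Algebra.TensorProduct.tmul_mul_tmul, one_mul, mul_one]
          rw [hXsl, hXsr]
        · simp
      rw [Finset.sum_congr rfl fun e _ => this e, Finset.sum_ite_eq' Finset.univ f]
      simp
    -- the induction
    refine Algebra.adjoin_induction (hx := hmemG a)
      (p := fun x _ => D (E i * s * E i) x
        = ((x * E i) ⊗ₜ[k] (E i)) - ((E i) ⊗ₜ[k] (E i * x))) ?_ ?_ ?_ ?_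
    · rintro x ((⟨f, rfl⟩ | ⟨f, rfl⟩) | ⟨j, rfl⟩)
      · rw [hDdelta, hDsX f]
        rw [mul_sub, sub_mul]
        simp only [Algebra.TensorProduct.tmul_mul_tmul, one_mul, mul_one]
        rw [hXE, hEX, hE, hE]
        rcases eq_or_ne (src f) i with h1 | h1 <;> rcases eq_or_ne (tgt f) i with h2 | h2
        · simp [h1, h2]
        · simp [h1, h2, h2.symm]
        · simp [h1, h1.symm, h2]
        · simp [h1, h1.symm, h2, h2.symm]
      · rw [hDdelta, hDsXs f]
        rw [mul_sub, sub_mul]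
        simp only [Algebra.TensorProduct.tmul_mul_tmul, one_mul, mul_one]
        rw [hXsE, hEXs, hE, hE]
        rcases eq_or_ne (src f) i with h1 | h1 <;> rcases eq_or_ne (tgt f) i with h2 | h2
        · simp [h1, h2]
        · simp [h1, h2, h2.symm]
        · simp [h1, h1.symm, h2]
        · simp [h1, h1.symm, h2, h2.symm]
      · rw [hDdelta, hlin s j, hE, hE]
        rcases eq_or_ne j i with h | h
        · simp [h]
        · simp [h, h.symm]
    · intro r
      rw [Algebra.algebraMap_eq_smul_one, map_smul, D_one D hder, smul_zero]
      rw [smul_mul_assoc, one_mul, mul_smul_comm, mul_one]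
      rw [← TensorProduct.smul_tmul', TensorProduct.tmul_smul]
      simp
    · intro x y _ _ hx hy
      rw [map_add, hx, hy, add_mul, mul_add, TensorProduct.add_tmul, TensorProduct.tmul_add]
      abel
    · intro x y _ _ hx hy
      rw [hder _ x y, hx, hy]
      rw [sub_mul, mul_sub]
      simp only [Algebra.TensorProduct.tmul_mul_tmul, one_mul, mul_one, mul_assoc]
      abel

end Stmt8
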